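/- A subset A ⊆ {1,…,2n} is a cocircuit (bond) of the Catalan matroid C_n if and only if (i) maxht_A = 1, and (ii) whenever ht_A(x) = 1 for some 0 ≤ x ≤ 2n, the set A contains no elements greater than x. -/
import Mathlib


/-- Height of the path with up-step set `A` after `x` steps: `2·|A ∩ {1,…,x}| − x`. -/
def ht (A : Finset ℕ) (x : ℕ) : ℤ := 2 * (A ∩ Finset.Icc 1 x).card - x

/-- `P` is the up-step set of a Dyck path of length `2n`. -/
def IsDyck (n : ℕ) (P : Finset ℕ) : Prop :=
  P ⊆ Finset.Icc 1 (2 * n) ∧ P.card = n ∧ ∀ x ≤ 2 * n, 0 ≤ ht P x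

/-- Maximum height of the path `A` over `0 ≤ x ≤ 2n`. -/
def maxht (n : ℕ) (A : Finset ℕ) : ℤ :=
  ((Finset.range (2 * n + 1)).image (ht A)).max' (by simp)

/-- `A` is independent in the dual of the Catalan matroid: it is contained in the
complement of some basis. -/
def CatalanCoindep (n : ℕ) (A : Finset ℕ) : Prop :=
  ∃ B : Finset ℕ, IsDyck n B ∧ A ⊆ Finset.Icc 1 (2 * n) \ B

/-- `A` is a cocircuit (bond) of the Catalan matroid: a circuit of the dual matroid,
i.e. a minimal subset of the ground set not contained in the complement of any basis. -/
def IsCatalanCocircuit (n : ℕ) (A : Finset ℕ) : Prop :=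
  A ⊆ Finset.Icc 1 (2 * n) ∧ ¬ CatalanCoindep n A ∧ ∀ A' ⊂ A, CatalanCoindep n A'

/- ### Auxiliary lemmas -/

lemma ht_zero (A : Finset ℕ) : ht A 0 = 0 := by simp [ht]

lemma ht_mono {A B : Finset ℕ} (h : A ⊆ B) (x : ℕ) : ht A x ≤ ht B x := by
  have : (A ∩ Finset.Icc 1 x).card ≤ (B ∩ Finset.Icc 1 x).card :=
    Finset.card_le_card (Finset.inter_subset_inter h (subset_refl _))
  simp only [ht]; omega

lemma ht_succ (A : Finset ℕ) (x : ℕ) :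
    ht A (x + 1) = ht A x + (if x + 1 ∈ A then 1 else -1) := by
  by_cases hx : x + 1 ∈ A
  · have hins : A ∩ Finset.Icc 1 (x + 1) = insert (x + 1) (A ∩ Finset.Icc 1 x) := by
      ext y
      simp only [Finset.mem_inter, Finset.mem_Icc, Finset.mem_insert]
      constructor
      · rintro ⟨hyA, h1, h2⟩
        rcases eq_or_lt_of_le h2 with he | hl
        · exact Or.inl he
        · exact Or.inr ⟨hyA, h1, by omega⟩
      · rintro (rfl | ⟨hyA, h1, h2⟩)
        · exact ⟨hx, by omega, le_rfl⟩
        · exact ⟨hyA, h1, by omega⟩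
    have hnm : x + 1 ∉ A ∩ Finset.Icc 1 x := by
      simp [Finset.mem_inter, Finset.mem_Icc]
    rw [ht, ht, hins, Finset.card_insert_of_notMem hnm, if_pos hx]
    push_cast; ring
  · have hins : A ∩ Finset.Icc 1 (x + 1) = A ∩ Finset.Icc 1 x := by
      ext y
      simp only [Finset.mem_inter, Finset.mem_Icc]
      constructor
      · rintro ⟨hyA, h1, h2⟩
        refine ⟨hyA, h1, ?_⟩
        rcases eq_or_lt_of_le h2 with he | hl
        · exact absurd (he ▸ hyA) hx
        · omega
      · rintro ⟨hyA, h1, h2⟩; exact ⟨hyA, h1, by omega⟩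
    rw [ht, ht, hins, if_neg hx]
    push_cast; ring

lemma ht_erase (A : Finset ℕ) (a : ℕ) (ha : a ∈ A) (x : ℕ) :
    ht (A.erase a) x = if a ∈ Finset.Icc 1 x then ht A x - 2 else ht A x := by
  have h : (A.erase a) ∩ Finset.Icc 1 x = (A ∩ Finset.Icc 1 x).erase a := by
    ext y
    simp only [Finset.mem_inter, Finset.mem_erase]
    tauto
  by_cases hm : a ∈ Finset.Icc 1 x
  · have hmm : a ∈ A ∩ Finset.Icc 1 x := Finset.mem_inter.mpr ⟨ha, hm⟩
    rw [if_pos hm, ht, ht, h, Finset.card_erase_of_mem hmm]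
    have h1 : 1 ≤ (A ∩ Finset.Icc 1 x).card := Finset.card_pos.mpr ⟨a, hmm⟩
    push_cast [h1]
    ring_nf
  · have : a ∉ A ∩ Finset.Icc 1 x := fun hc => hm (Finset.mem_inter.mp hc).2
    rw [if_neg hm, ht, ht, h, Finset.erase_eq_of_notMem this]

/-- counting function: number of elements of `S` that are in `[1, y]`. -/
def cnt (S : Finset ℕ) (y : ℕ) : ℕ := (S ∩ Finset.Icc 1 y).card

lemma cnt_mono (S : Finset ℕ) {x y : ℕ} (h : x ≤ y) : cnt S x ≤ cnt S y :=
  Finset.card_le_card (Finset.inter_subset_inter (subset_refl _)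
    (Finset.Icc_subset_Icc le_rfl h))

lemma cnt_lt_cnt {S : Finset ℕ} {y z : ℕ} (hz : z ∈ S) (h1 : 1 ≤ z) (h : y < z) :
    cnt S y < cnt S z := by
  apply Finset.card_lt_card
  rw [Finset.ssubset_iff_of_subset
    (Finset.inter_subset_inter (subset_refl _) (Finset.Icc_subset_Icc le_rfl (by omega)))]
  exact ⟨z, Finset.mem_inter.mpr ⟨hz, Finset.mem_Icc.mpr ⟨h1, le_rfl⟩⟩,
    fun hc => by have := (Finset.mem_Icc.mp (Finset.mem_inter.mp hc).2).2; omega⟩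

lemma cnt_injOn {S : Finset ℕ} (hS : ∀ y ∈ S, 1 ≤ y) {y z : ℕ} (hy : y ∈ S) (hz : z ∈ S)
    (h : cnt S y = cnt S z) : y = z := by
  rcases lt_trichotomy y z with h' | h' | h'
  · exact absurd h (Nat.ne_of_lt (cnt_lt_cnt hz (hS z hz) h'))
  · exact h'
  · exact absurd h.symm (Nat.ne_of_lt (cnt_lt_cnt hy (hS y hy) h'))

lemma one_le_cnt {S : Finset ℕ} {y : ℕ} (hy : y ∈ S) (h1 : 1 ≤ y) : 1 ≤ cnt S y :=
  Finset.card_pos.mpr ⟨y, Finset.mem_inter.mpr ⟨hy, Finset.mem_Icc.mpr ⟨h1, le_rfl⟩⟩⟩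

lemma cnt_le_card (S : Finset ℕ) (y : ℕ) : cnt S y ≤ S.card :=
  Finset.card_le_card Finset.inter_subset_left

/-- The key characterization: a subset of the ground set is coindependent iff its
height never exceeds `0`. -/
lemma coindep_iff (n : ℕ) (A : Finset ℕ) (hA : A ⊆ Finset.Icc 1 (2 * n)) :
    CatalanCoindep n A ↔ ∀ x ≤ 2 * n, ht A x ≤ 0 := by
  constructor
  · rintro ⟨B, ⟨hBsub, hBcard, hBht⟩, hAB⟩ x hx
    have hdisj : Disjoint (A ∩ Finset.Icc 1 x) (B ∩ Finset.Icc 1 x) := by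
      rw [Finset.disjoint_left]
      intro t ht1 ht2
      have := hAB (Finset.mem_inter.mp ht1).1
      exact (Finset.mem_sdiff.mp this).2 (Finset.mem_inter.mp ht2).1
    have hcard : (A ∩ Finset.Icc 1 x).card + (B ∩ Finset.Icc 1 x).card ≤ x := by
      rw [← Finset.card_union_of_disjoint hdisj]
      calc ((A ∩ Finset.Icc 1 x) ∪ (B ∩ Finset.Icc 1 x)).card
          ≤ (Finset.Icc 1 x).card := Finset.card_le_card (by
            intro t htm
            rcases Finset.mem_union.mp htm with h | h
            · exact (Finset.mem_inter.mp h).2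
            · exact (Finset.mem_inter.mp h).2)
        _ = x := by rw [Nat.card_Icc]; omega
    have hB := hBht x hx
    simp only [ht] at hB ⊢
    omega
  · intro h
    -- Greedy construction: take the first n elements of the complement of A.
    set C := Finset.Icc 1 (2 * n) \ A with hCdef
    have hC1 : ∀ y ∈ C, 1 ≤ y := by
      intro y hy
      exact (Finset.mem_Icc.mp (Finset.mem_sdiff.mp hy).1).1
    have hC2n : ∀ y ∈ C, y ≤ 2 * n := by
      intro y hy
      exact (Finset.mem_Icc.mp (Finset.mem_sdiff.mp hy).1).2
    set B := C.filter (fun y => cnt C y ≤ n) with hBdef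
    have hBC : B ⊆ C := Finset.filter_subset _ _
    have hAcard : A.card ≤ n := by
      have h2 := h (2 * n) le_rfl
      have : A ∩ Finset.Icc 1 (2 * n) = A := Finset.inter_eq_left.mpr hA
      rw [ht, this] at h2
      omega
    have hCcard : C.card = 2 * n - A.card := by
      rw [hCdef, Finset.card_sdiff_of_subset hA, Nat.card_Icc]
      omega
    have hCn : n ≤ C.card := by omega
    -- card B = n
    have hBle : B.card ≤ n := by
      have hle : B.card ≤ (Finset.Icc 1 n).card := by
        apply Finset.card_le_card_of_injOn (cnt C)
        · intro y hy
          have hyC := hBC hy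
          have hy2 := (Finset.mem_filter.mp hy).2
          exact Finset.mem_Icc.mpr ⟨one_le_cnt hyC (hC1 y hyC), hy2⟩
        · intro y hy z hz hc
          exact cnt_injOn hC1 (hBC (Finset.mem_coe.mp hy)) (hBC (Finset.mem_coe.mp hz)) hc
      rw [Nat.card_Icc, Nat.add_sub_cancel] at hle
      exact hle
    have hDle : (C.filter (fun y => ¬ cnt C y ≤ n)).card ≤ C.card - n := by
      have hle : (C.filter (fun y => ¬ cnt C y ≤ n)).card ≤ (Finset.Ioc n C.card).card := by
        apply Finset.card_le_card_of_injOn (cnt C)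
        · intro y hy
          have hy2 := (Finset.mem_filter.mp hy).2
          exact Finset.mem_Ioc.mpr ⟨by omega, cnt_le_card C y⟩
        · intro y hy z hz hc
          exact cnt_injOn hC1 (Finset.filter_subset _ _ (Finset.mem_coe.mp hy))
            (Finset.filter_subset _ _ (Finset.mem_coe.mp hz)) hc
      rw [Nat.card_Ioc] at hle
      exact hle
    have hsum : B.card + (C.filter (fun y => ¬ cnt C y ≤ n)).card = C.card :=
      Finset.card_filter_add_card_filter_not _
    have hBcard : B.card = n := by omega
    refine ⟨B, ⟨hBC.trans (Finset.sdiff_subset), hBcard, ?_⟩, ?_⟩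
    · -- Dyck property
      intro x hx
      by_cases hc : cnt C x ≤ n
      · have hBCx : B ∩ Finset.Icc 1 x = C ∩ Finset.Icc 1 x := by
          apply Finset.Subset.antisymm
            (Finset.inter_subset_inter hBC (subset_refl _))
          intro y hy
          obtain ⟨hyC, hyI⟩ := Finset.mem_inter.mp hy
          refine Finset.mem_inter.mpr ⟨Finset.mem_filter.mpr ⟨hyC, ?_⟩, hyI⟩
          exact le_trans (cnt_mono C (Finset.mem_Icc.mp hyI).2) hc
        have hCx : C ∩ Finset.Icc 1 x = Finset.Icc 1 x \ (A ∩ Finset.Icc 1 x) := by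
          ext y
          simp only [hCdef, Finset.mem_inter, Finset.mem_sdiff, Finset.mem_Icc]
          constructor
          · rintro ⟨⟨h1, h2⟩, h3⟩; exact ⟨h3, fun hc' => h2 hc'.1⟩
          · rintro ⟨h1, h2⟩
            have hy1 := (Finset.mem_Icc.mp (show y ∈ Finset.Icc 1 x from Finset.mem_Icc.mpr h1))
            refine ⟨⟨⟨h1.1, le_trans h1.2 hx⟩, fun hc' => h2 ⟨hc', h1⟩⟩, h1⟩
        have hcard2 : (C ∩ Finset.Icc 1 x).card = x - (A ∩ Finset.Icc 1 x).card := by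
          rw [hCx, Finset.card_sdiff_of_subset Finset.inter_subset_right, Nat.card_Icc]
          omega
        have hax : (A ∩ Finset.Icc 1 x).card ≤ (Finset.Icc 1 x).card :=
          Finset.card_le_card Finset.inter_subset_right
        rw [Nat.card_Icc, Nat.add_sub_cancel] at hax
        have hhA := h x hx
        rw [ht] at hhA ⊢
        rw [hBCx, hcard2]
        omega
      · have hBx : B ⊆ Finset.Icc 1 x := by
          intro y hy
          obtain ⟨hyC, hyn⟩ := Finset.mem_filter.mp hy
          refine Finset.mem_Icc.mpr ⟨hC1 y hyC, ?_⟩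
          by_contra hyx
          exact hc (le_trans (cnt_mono C (by omega)) hyn)
        rw [ht, Finset.inter_eq_left.mpr hBx, hBcard]
        omega
    · intro a ha
      refine Finset.mem_sdiff.mpr ⟨hA ha, fun hc => ?_⟩
      exact (Finset.mem_sdiff.mp (hBC hc)).2 ha

lemma ht_le_maxht (n : ℕ) (A : Finset ℕ) {x : ℕ} (hx : x ≤ 2 * n) :
    ht A x ≤ maxht n A :=
  Finset.le_max' _ _ (Finset.mem_image.mpr ⟨x, Finset.mem_range.mpr (by omega), rfl⟩)

lemma exists_maxht (n : ℕ) (A : Finset ℕ) : ∃ x ≤ 2 * n, ht A x = maxht n A := by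
  have := Finset.max'_mem ((Finset.range (2 * n + 1)).image (ht A)) (by simp)
  obtain ⟨x, hx, hx2⟩ := Finset.mem_image.mp this
  exact ⟨x, by have := Finset.mem_range.mp hx; omega, hx2⟩

lemma maxht_le (n : ℕ) (A : Finset ℕ) {c : ℤ} (h : ∀ x ≤ 2 * n, ht A x ≤ c) :
    maxht n A ≤ c := by
  apply Finset.max'_le
  intro y hy
  obtain ⟨x, hx, rfl⟩ := Finset.mem_image.mp hy
  exact h x (by have := Finset.mem_range.mp hx; omega)

/-- The cocircuits (bonds) of the Catalan matroid are the subsets `A` of the ground set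
with (i) `maxht_A = 1` and (ii) whenever `ht_A(x) = 1`, `A` has no elements `> x`. -/
theorem catalan_cocircuits (n : ℕ) (hn : 0 < n) (A : Finset ℕ)
    (hA : A ⊆ Finset.Icc 1 (2 * n)) :
    IsCatalanCocircuit n A ↔
      (maxht n A = 1 ∧ ∀ x ≤ 2 * n, ht A x = 1 → ∀ a ∈ A, a ≤ x) := by
  constructor
  · rintro ⟨hsub, hdep, hmin⟩
    have hex : ∃ x ≤ 2 * n, 1 ≤ ht A x := by
      by_contra hc
      push_neg at hc
      exact hdep ((coindep_iff n A hA).mpr (fun x hx => by have := hc x hx; omega))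
    obtain ⟨x0, hx0, hx01⟩ := hex
    -- every proper subset (via erasing one element) is coindep
    have herase : ∀ a ∈ A, ∀ x ≤ 2 * n, ht (A.erase a) x ≤ 0 := by
      intro a ha x hx
      have hss : A.erase a ⊂ A := Finset.erase_ssubset ha
      have := hmin _ hss
      exact (coindep_iff n (A.erase a) ((Finset.erase_subset a A).trans hA)).mp this x hx
    -- heights are at most 1
    have hle1 : ∀ x ≤ 2 * n, ht A x ≤ 1 := by
      by_contra hc
      push_neg at hc
      obtain ⟨x, hx, hx2⟩ := hc
      have hx2 : 2 ≤ ht A x := by omega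
      have hP : ∃ y, 2 ≤ ht A y ∧ y ≤ 2 * n := ⟨x, hx2, hx⟩
      classical
      obtain ⟨hy02, hy0le⟩ := Nat.find_spec hP
      have hy0ne : Nat.find hP ≠ 0 := by
        intro hc0
        rw [hc0, ht_zero] at hy02
        omega
      obtain ⟨y, hyeq⟩ : ∃ y, Nat.find hP = y + 1 := ⟨Nat.find hP - 1, by omega⟩
      rw [hyeq] at hy02 hy0le
      have hymin := Nat.find_min hP (show y < Nat.find hP by omega)
      push_neg at hymin
      have hy1 : ht A y ≤ 1 := by
        by_contra hcc
        exact absurd (hymin (by omega)) (by omega)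
      have hstep := ht_succ A y
      have hmem : y + 1 ∈ A := by
        by_contra hcc
        rw [if_neg hcc] at hstep
        omega
      rw [if_pos hmem] at hstep
      have hy_eq : ht A y = 1 := by omega
      have := herase (y + 1) hmem y (by omega)
      rw [ht_erase A (y + 1) hmem y, if_neg (by simp)] at this
      omega
    constructor
    · refine le_antisymm (maxht_le n A hle1) ?_
      calc (1 : ℤ) ≤ ht A x0 := hx01
        _ ≤ maxht n A := ht_le_maxht n A hx0
    · intro x hx hht a ha
      by_contra hax
      push_neg at hax
      have := herase a ha x hx
      rw [ht_erase A a ha x, if_neg (by simp; omega)] at this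
      omega
  · rintro ⟨hmax, hii⟩
    have hle1 : ∀ x ≤ 2 * n, ht A x ≤ 1 := fun x hx => hmax ▸ ht_le_maxht n A hx
    refine ⟨hA, ?_, ?_⟩
    · intro hco
      obtain ⟨x, hx, hxe⟩ := exists_maxht n A
      have := (coindep_iff n A hA).mp hco x hx
      rw [hxe, hmax] at this
      omega
    · intro A' hA'
      obtain ⟨a, haA, haA'⟩ := Finset.exists_of_ssubset hA'
      have hsub' : A' ⊆ A.erase a := Finset.subset_erase.mpr ⟨hA'.subset, haA'⟩
      apply (coindep_iff n A' (hA'.subset.trans hA)).mpr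
      intro x hx
      refine le_trans (ht_mono hsub' x) ?_
      rw [ht_erase A a haA x]
      by_cases hm : a ∈ Finset.Icc 1 x
      · rw [if_pos hm]
        have := hle1 x hx
        omega
      · rw [if_neg hm]
        have h1 := hle1 x hx
        by_contra hc
        push_neg at hc
        have heq : ht A x = 1 := by omega
        have := hii x hx heq a haA
        have h1a := (Finset.mem_Icc.mp (hA haA)).1
        exact hm (Finset.mem_Icc.mpr ⟨h1a, this⟩)
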